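/- Let S be a closed subspace of ℓ∞ containing c₀. If S has weak*-sequentially compact dual ball, then S is not an ℓ∞-Grothendieck subspace. -/

import Mathlib

open Filter Topology MeasureTheory
open scoped ENNReal

noncomputable section

/-- A Banach space `X` has weak*-sequentially compact dual ball if every sequence in the
closed unit ball of `X*` has a weak*-convergent subsequence. -/
def WStarSeqCompactDualBall (X : Type*) [SeminormedAddCommGroup X] [NormedSpace ℝ X] : Prop :=
  ∀ f : ℕ → (X →L[ℝ] ℝ), (∀ n, ‖f n‖ ≤ 1) →
    ∃ φ : ℕ → ℕ, StrictMono φ ∧ ∃ g : X →L[ℝ] ℝ,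
      ∀ x : X, Tendsto (fun k => f (φ k) x) atTop (nhds (g x))

/-- A Banach space `X` is a Grothendieck space if every weak*-convergent sequence in `X*`
is weakly convergent. -/
def GrothendieckSpace (X : Type*) [SeminormedAddCommGroup X] [NormedSpace ℝ X] : Prop :=
  ∀ (f : ℕ → (X →L[ℝ] ℝ)) (g : X →L[ℝ] ℝ),
    (∀ x : X, Tendsto (fun n => f n x) atTop (nhds (g x))) →
    ∀ F : (X →L[ℝ] ℝ) →L[ℝ] ℝ, Tendsto (fun n => F (f n)) atTop (nhds (F g))

/-- An operator is weakly compact if the closure of the image of the closed unit ball is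
compact in the weak topology of the codomain. -/
def IsWeaklyCompactOp {X Y : Type*} [SeminormedAddCommGroup X] [NormedSpace ℝ X]
    [SeminormedAddCommGroup Y] [NormedSpace ℝ Y] (T : X →L[ℝ] Y) : Prop :=
  IsCompact (closure (toWeakSpace ℝ Y '' (T '' Metric.closedBall (0:X) 1)))

/-- `ℓ¹`, the space of absolutely summable real sequences. -/
abbrev ellOne : Type := ↥(lp (fun _ : ℕ => ℝ) 1)

/-- Two normed spaces are isomorphic if there is a continuous linear bijection between them
with continuous inverse. -/
def IsomorphicBanach (X Y : Type*) [SeminormedAddCommGroup X] [NormedSpace ℝ X]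
    [SeminormedAddCommGroup Y] [NormedSpace ℝ Y] : Prop :=
  Nonempty (X ≃L[ℝ] Y)

/-- `ℓ∞`, the space of bounded real sequences with the sup norm. -/
abbrev ellInfty : Type := ↥(lp (fun _ : ℕ => ℝ) ∞)

/-- `c₀`, the subspace of `ℓ∞` of sequences converging to `0`. -/
def cZero : Submodule ℝ ellInfty where
  carrier := {x | Tendsto (fun i => (x : ℕ → ℝ) i) atTop (nhds 0)}
  zero_mem' := by
    simpa [lp.coeFn_zero] using (tendsto_const_nhds : Tendsto (fun _ : ℕ => (0:ℝ)) atTop (nhds 0))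
  add_mem' := by
    intro x y hx hy
    have := hx.add hy
    simpa [lp.coeFn_add] using this
  smul_mem' := by
    intro c x hx
    have := hx.const_mul c
    simpa [lp.coeFn_smul, smul_eq_mul] using this

/-- The `i`-th standard unit vector in `ℓ∞`. -/
def eVec (i : ℕ) : ellInfty := lp.single ∞ i 1

lemma eVec_mem_cZero (i : ℕ) : eVec i ∈ cZero := by
  have h : (fun n => (eVec i : ℕ → ℝ) n) =ᶠ[atTop] fun _ => (0:ℝ) := by
    filter_upwards [eventually_gt_atTop i] with n hn
    simp [eVec, lp.single_apply, hn.ne']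
  exact Tendsto.congr' h.symm tendsto_const_nhds

/-- The `i`-th standard unit vector, as an element of a subspace `S` of `ℓ∞` containing `c₀`. -/
def eIn (S : Submodule ℝ ellInfty) (hS : cZero ≤ S) (i : ℕ) : ↥S :=
  ⟨eVec i, hS (eVec_mem_cZero i)⟩

/-- A sequence `(fₙ)` in `S*` is `σ(S*,ℓ∞)`-convergent to `g` if, testing against the unit
vectors `eᵢ`, it converges against every bounded real sequence `z`. -/
def SigmaLinfConv (S : Submodule ℝ ellInfty) (hS : cZero ≤ S)
    (f : ℕ → (↥S →L[ℝ] ℝ)) (g : ↥S →L[ℝ] ℝ) : Prop :=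
  ∀ z : ℕ → ℝ, (∃ C : ℝ, ∀ i, |z i| ≤ C) →
    Tendsto (fun n => ∑' i, z i * f n (eIn S hS i)) atTop
      (nhds (∑' i, z i * g (eIn S hS i)))

/-- `S` is an `ℓ∞`-Grothendieck subspace if it contains `c₀` and every weak*-convergent
sequence in `S*` is `σ(S*,ℓ∞)`-convergent. -/
def IsLinfGrothendieck (S : Submodule ℝ ellInfty) : Prop :=
  ∃ hS : cZero ≤ S, ∀ (f : ℕ → (↥S →L[ℝ] ℝ)) (g : ↥S →L[ℝ] ℝ),
    (∀ x : ↥S, Tendsto (fun n => f n x) atTop (nhds (g x))) →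
    SigmaLinfConv S hS f g

-- aux lemmas to insert
/-- Evaluation at coordinate `n`, as a continuous linear functional on a subspace of `ℓ∞`. -/
def coordEval (S : Submodule ℝ ellInfty) (n : ℕ) : ↥S →L[ℝ] ℝ :=
  LinearMap.mkContinuous
    { toFun := fun x => ((x : ellInfty) : ℕ → ℝ) n
      map_add' := by intro x y; simp [lp.coeFn_add]
      map_smul' := by intro c x; simp [lp.coeFn_smul] }
    1 (fun x => by
      rw [one_mul]
      exact lp.norm_apply_le_norm ENNReal.top_ne_zero (x : ellInfty) n)

lemma coordEval_norm_le (S : Submodule ℝ ellInfty) (n : ℕ) : ‖coordEval S n‖ ≤ 1 :=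
  LinearMap.mkContinuous_norm_le _ zero_le_one _

lemma coordEval_eIn (S : Submodule ℝ ellInfty) (hS : cZero ≤ S) (n i : ℕ) :
    coordEval S n (eIn S hS i) = if n = i then 1 else 0 := by
  simp [coordEval, eIn, eVec, lp.single_apply, LinearMap.mkContinuous_apply]
  change ((lp.single ∞ i (1:ℝ) : ellInfty) : ℕ → ℝ) n = _
  simp [lp.single_apply, Pi.single_apply]

lemma neg_one_pow_not_tendsto (L : ℝ) :
    ¬ Tendsto (fun k : ℕ => ((-1 : ℝ)) ^ k) atTop (nhds L) := by
  intro h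
  have h1 : Tendsto (fun m : ℕ => ((-1 : ℝ)) ^ (2 * m)) atTop (nhds L) :=
    h.comp (tendsto_atTop_atTop_of_monotone (fun a b hab => by omega)
      (fun b => ⟨b, by omega⟩))
  have h2 : Tendsto (fun m : ℕ => ((-1 : ℝ)) ^ (2 * m + 1)) atTop (nhds L) :=
    h.comp (tendsto_atTop_atTop_of_monotone (fun a b hab => by omega)
      (fun b => ⟨b, by omega⟩))
  have e1 : L = 1 := by
    have : Tendsto (fun _ : ℕ => (1 : ℝ)) atTop (nhds L) := by
      simpa [pow_mul, neg_one_sq] using h1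
    exact tendsto_nhds_unique this tendsto_const_nhds
  have e2 : L = -1 := by
    have : Tendsto (fun _ : ℕ => (-1 : ℝ)) atTop (nhds L) := by
      simpa [pow_succ, pow_mul, neg_one_sq] using h2
    exact tendsto_nhds_unique this tendsto_const_nhds
  norm_num [e1] at e2

/-- a closed subspace of `ℓ∞` containing `c₀` with weak*-sequentially compact
dual ball is not an `ℓ∞`-Grothendieck subspace. -/
theorem not_linfGrothendieck_of_wstar_seq_compact
    (S : Submodule ℝ ellInfty) (hcl : IsClosed (S : Set ellInfty))
    (hS : cZero ≤ S)
    (hW : WStarSeqCompactDualBall ↥S) :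
    ¬ IsLinfGrothendieck S := by
  classical
  rintro ⟨hS', hG⟩
  obtain ⟨φ, hφ, g, hg⟩ := hW (coordEval S) (coordEval_norm_le S)
  set z : ℕ → ℝ := fun j => if h : ∃ k, φ k = j then (-1 : ℝ) ^ h.choose else 0 with hz
  have hzb : ∃ C : ℝ, ∀ i, |z i| ≤ C := by
    refine ⟨1, fun i => ?_⟩
    by_cases h : ∃ k, φ k = i <;> simp [hz, h, abs_pow]
  have key := hG (fun k => coordEval S (φ k)) g hg z hzb
  have hzφ : ∀ k, z (φ k) = (-1 : ℝ) ^ k := by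
    intro k
    have h : ∃ m, φ m = φ k := ⟨k, rfl⟩
    have h2 : z (φ k) = (-1 : ℝ) ^ h.choose := dif_pos h
    rw [h2, hφ.injective h.choose_spec]
  have hsum : ∀ k, (∑' i, z i * coordEval S (φ k) (eIn S hS' i)) = (-1 : ℝ) ^ k := by
    intro k
    rw [← hzφ k]
    refine tsum_eq_single (φ k) (fun b hb => ?_) |>.trans ?_
    · simp [coordEval_eIn, Ne.symm hb]
    · simp [coordEval_eIn]
  rw [funext hsum] at key
  exact neg_one_pow_not_tendsto _ key
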